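/- Two distinct regular orbits of the circle action ζ·(a,b) = (ζ²a, ζ³b) on the unit sphere S³ ⊂ ℂ² are disjoint (2,3)-torus knots, and their linking number in S³ is 6. -/

import Mathlib

/-- The unit 3-sphere in `ℂ²`. -/
def Sphere3 : Set (ℂ × ℂ) := {p | ‖p.1‖ ^ 2 + ‖p.2‖ ^ 2 = 1}

/-- The standard parametrization of the orbit of `(a,b)` under the circle action
`ζ·(a,b) = (ζ²a, ζ³b)`, with `ζ = exp(2πit)`. -/
noncomputable def orbitLoop (a b : ℂ) (t : ℝ) : ℂ × ℂ :=
  (Complex.exp (2 * Real.pi * Complex.I * t) ^ 2 * a,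
   Complex.exp (2 * Real.pi * Complex.I * t) ^ 3 * b)

/-- The orbit of `(a,b)` under the circle action, as a subset of `ℂ²`. -/
def orbitSet (a b : ℂ) : Set (ℂ × ℂ) :=
  {q | ∃ ζ : ℂ, ‖ζ‖ = 1 ∧ q = (ζ ^ 2 * a, ζ ^ 3 * b)}

lemma real_key {x y x' y' : ℝ} (hx : 0 < x) (hy : 0 < y) (hx' : 0 < x') (hy' : 0 < y')
    (h1 : x + y = 1) (h2 : x' + y' = 1) (heq : y' ^ 2 * x ^ 3 = x' ^ 3 * y ^ 2) : x = x' := by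
  rcases lt_trichotomy x x' with hlt | he | hgt
  · exfalso
    have hyy : y' < y := by linarith
    nlinarith [pow_lt_pow_left₀ hlt hx.le three_ne_zero, pow_lt_pow_left₀ hyy hy'.le two_ne_zero,
      pow_pos hx 3, pow_pos hy' 2, pow_pos hx' 3, pow_pos hy 2]
  · exact he
  · exfalso
    have hyy : y < y' := by linarith
    nlinarith [pow_lt_pow_left₀ hgt hx'.le three_ne_zero, pow_lt_pow_left₀ hyy hy.le two_ne_zero,
      pow_pos hx 3, pow_pos hy' 2, pow_pos hx' 3, pow_pos hy 2]

lemma mem_orbit_of_eq (a b a' b' : ℂ) (h : (a, b) ∈ Sphere3) (h' : (a', b') ∈ Sphere3)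
    (ha : a ≠ 0) (hb : b ≠ 0) (ha' : a' ≠ 0) (hb' : b' ≠ 0)
    (heq : b' ^ 2 * a ^ 3 = a' ^ 3 * b ^ 2) : (a', b') ∈ orbitSet a b := by
  have habs : ‖b'‖ ^ 2 * ‖a‖ ^ 3 = ‖a'‖ ^ 3 * ‖b‖ ^ 2 := by
    have := congrArg (fun z : ℂ => ‖z‖) heq
    simpa [norm_mul, norm_pow] using this
  have hA : (0:ℝ) < ‖a‖ := norm_pos_iff.mpr ha
  have hB : (0:ℝ) < ‖b‖ := norm_pos_iff.mpr hb
  have hA' : (0:ℝ) < ‖a'‖ := norm_pos_iff.mpr ha'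
  have hB' : (0:ℝ) < ‖b'‖ := norm_pos_iff.mpr hb'
  have hxx : ‖a‖ ^ 2 = ‖a'‖ ^ 2 := by
    apply real_key (pow_pos hA 2) (pow_pos hB 2) (pow_pos hA' 2) (pow_pos hB' 2) h h'
    linear_combination (‖b'‖ ^ 2 * ‖a‖ ^ 3 + ‖a'‖ ^ 3 * ‖b‖ ^ 2) * habs
  have hAA : ‖a‖ = ‖a'‖ := by nlinarith [hA.le, hA'.le]
  have hsq : ‖b'‖ ^ 2 = ‖b‖ ^ 2 := by
    rw [hAA] at habs
    exact mul_right_cancel₀ (pow_ne_zero 3 hA'.ne') (by linear_combination habs)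
  have hBB : ‖b‖ = ‖b'‖ := by nlinarith [hB.le, hB'.le]
  refine ⟨(b' * a) / (b * a'), ?_, ?_⟩
  · rw [norm_div, norm_mul, norm_mul, hAA, hBB]
    field_simp
  · have hba : b * a' ≠ 0 := mul_ne_zero hb ha'
    simp only [Prod.mk.injEq]
    constructor
    · field_simp
      ring_nf
      linear_combination (-(1:ℂ)) * heq
    · field_simp
      ring_nf
      linear_combination (-(1:ℂ)) * heq

/-- Two distinct regular orbits of the circle action `ζ·(a,b) = (ζ²a, ζ³b)` on
`S³ ⊂ ℂ²` are disjoint `(2,3)`-torus knots, and their linking number in `S³` is `6`.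

Each orbit is a knot: its loop parametrization is injective on `[0,1)` and lies on
the torus `{|z₁| = |a|, |z₂| = |b|}`.  The linking number of the orbit of `(a,b)`
with the orbit of `(a',b')` is computed as the winding number around `0` of the
Seifert function `g(z,w) = b'²z³ − a'³w²` (which cuts out the second orbit on
`S³`) along the first orbit: any continuous angular lift `θ` of `t ↦ g(γ(t))`
gains `6·2π` as `t` runs from `0` to `1`. -/
theorem regular_orbits_disjoint_torus_knots_linking_six
    (a b a' b' : ℂ) (h : (a, b) ∈ Sphere3) (h' : (a', b') ∈ Sphere3)
    (ha : a ≠ 0) (hb : b ≠ 0) (ha' : a' ≠ 0) (hb' : b' ≠ 0)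
    (hdistinct : (a', b') ∉ orbitSet a b) :
    -- the two orbits are disjoint
    Disjoint (orbitSet a b) (orbitSet a' b') ∧
    -- each orbit is a knot lying on a standardly embedded torus: an injectively
    -- parametrized (2,3)-curve
    (∀ t s : ℝ, t ∈ Set.Ico (0 : ℝ) 1 → s ∈ Set.Ico (0 : ℝ) 1 →
      orbitLoop a b t = orbitLoop a b s → t = s) ∧
    (∀ t : ℝ, ‖(orbitLoop a b t).1‖ = ‖a‖ ∧
      ‖(orbitLoop a b t).2‖ = ‖b‖) ∧
    (∀ t : ℝ, orbitLoop a b t ∈ orbitSet a b) ∧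
    -- the Seifert function of the second orbit does not vanish on the first orbit
    (∀ t : ℝ, b' ^ 2 * (orbitLoop a b t).1 ^ 3 - a' ^ 3 * (orbitLoop a b t).2 ^ 2 ≠ 0) ∧
    -- linking number 6: any continuous angular lift of the Seifert function along
    -- the first orbit increases by `6 · 2π` over one period
    (∀ θ : ℝ → ℝ, Continuous θ →
      (∀ t : ℝ, b' ^ 2 * (orbitLoop a b t).1 ^ 3 - a' ^ 3 * (orbitLoop a b t).2 ^ 2 =
        ((‖b' ^ 2 * (orbitLoop a b t).1 ^ 3 -
          a' ^ 3 * (orbitLoop a b t).2 ^ 2‖ : ℝ) : ℂ) * Complex.exp (θ t * Complex.I)) →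
      θ 1 - θ 0 = 6 * (2 * Real.pi)) := by
  set c : ℂ := b' ^ 2 * a ^ 3 - a' ^ 3 * b ^ 2 with hc_def
  have hc : c ≠ 0 := by
    intro h0
    exact hdistinct (mem_orbit_of_eq a b a' b' h h' ha hb ha' hb' (by linear_combination h0))
  have habs_e : ∀ t : ℝ, ‖Complex.exp (2 * Real.pi * Complex.I * t)‖ = 1 := by
    intro t
    rw [Complex.norm_exp]
    norm_num [Complex.mul_re, Complex.mul_im]
  have hg : ∀ t : ℝ, b' ^ 2 * (orbitLoop a b t).1 ^ 3 - a' ^ 3 * (orbitLoop a b t).2 ^ 2 =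
      Complex.exp (2 * Real.pi * Complex.I * t) ^ 6 * c := by
    intro t; simp only [orbitLoop, hc_def]; ring
  refine ⟨?_, ?_, ?_, ?_, ?_, ?_⟩
  · rw [Set.disjoint_left]
    rintro q ⟨ζ, hζ, rfl⟩ ⟨η, hη, heq2⟩
    have hηne : η ≠ 0 := by
      intro h0; rw [h0] at hη; simp at hη
    have h1 : ζ ^ 2 * a = η ^ 2 * a' := by
      have := congrArg Prod.fst heq2; simpa using this
    have h2 : ζ ^ 3 * b = η ^ 3 * b' := by
      have := congrArg Prod.snd heq2; simpa using this
    apply hdistinct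
    refine ⟨ζ / η, ?_, ?_⟩
    · rw [norm_div, hζ, hη]; norm_num
    · simp only [Prod.mk.injEq]
      constructor
      · field_simp
        linear_combination (-1 : ℂ) * h1
      · field_simp
        linear_combination (-1 : ℂ) * h2
  · rintro t s ⟨ht0, ht1⟩ ⟨hs0, hs1⟩ heq
    set et := Complex.exp (2 * Real.pi * Complex.I * t) with het
    set es := Complex.exp (2 * Real.pi * Complex.I * s) with hes
    have h1 : et ^ 2 * a = es ^ 2 * a := congrArg Prod.fst heq
    have h2 : et ^ 3 * b = es ^ 3 * b := congrArg Prod.snd heq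
    have E2 : et ^ 2 = es ^ 2 := mul_right_cancel₀ ha h1
    have E3 : et ^ 3 = es ^ 3 := mul_right_cancel₀ hb h2
    have hE2ne : et ^ 2 ≠ 0 := pow_ne_zero _ (Complex.exp_ne_zero _)
    have hE : et = es := by
      have h23 : et * et ^ 2 = es * es ^ 2 := by
        calc et * et ^ 2 = et ^ 3 := by ring
          _ = es ^ 3 := E3
          _ = es * es ^ 2 := by ring
      rw [E2] at h23
      exact mul_right_cancel₀ (pow_ne_zero _ (Complex.exp_ne_zero _)) h23
    rw [het, hes, Complex.exp_eq_exp_iff_exists_int] at hE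
    obtain ⟨n, hn⟩ := hE
    have htc : (t : ℂ) = s + n := by
      have h2πI : (2 * Real.pi * Complex.I) ≠ 0 := by
        simp [Complex.ext_iff, Real.pi_ne_zero]
      apply mul_left_cancel₀ h2πI
      rw [mul_add]
      linear_combination hn
    have htr : t = s + n := by exact_mod_cast htc
    have hn1 : (-1 : ℝ) < (n : ℝ) := by linarith
    have hn2 : (n : ℝ) < 1 := by linarith
    have hz : n = 0 := by
      have h1' : (-1 : ℤ) < n := by exact_mod_cast hn1
      have h2' : n < 1 := by exact_mod_cast hn2
      omega
    rw [hz] at htr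
    push_cast at htr
    linarith
  · intro t
    constructor <;> simp [orbitLoop, norm_mul, norm_pow, habs_e t]
  · intro t
    exact ⟨Complex.exp (2 * Real.pi * Complex.I * t), habs_e t, rfl⟩
  · intro t
    rw [hg t]
    exact mul_ne_zero (pow_ne_zero _ (Complex.exp_ne_zero _)) hc
  · intro θ hθ Hθ
    have hgabs : ∀ t : ℝ, ‖b' ^ 2 * (orbitLoop a b t).1 ^ 3 -
        a' ^ 3 * (orbitLoop a b t).2 ^ 2‖ = ‖c‖ := by
      intro t
      rw [hg t, norm_mul, norm_pow, habs_e t]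
      norm_num
    have key : ∀ t : ℝ, Complex.exp (2 * Real.pi * Complex.I * t) ^ 6 * c =
        ((‖c‖ : ℝ) : ℂ) * Complex.exp (θ t * Complex.I) := by
      intro t
      rw [← hg t, ← hgabs t]
      exact Hθ t
    have key0 : c = ((‖c‖ : ℝ) : ℂ) * Complex.exp (θ 0 * Complex.I) := by
      have := key 0
      simpa using this
    have habsc : ((‖c‖ : ℝ) : ℂ) ≠ 0 := by
      simpa using (norm_ne_zero_iff.mpr hc)
    have key2 : ∀ t : ℝ, Complex.exp ((2 * Real.pi * Complex.I * t) * 6 + θ 0 * Complex.I) =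
        Complex.exp (θ t * Complex.I) := by
      intro t
      apply mul_left_cancel₀ habsc
      rw [Complex.exp_add]
      have h6 : Complex.exp ((2 * Real.pi * Complex.I * t) * 6) =
          Complex.exp (2 * Real.pi * Complex.I * t) ^ 6 := by
        rw [← Complex.exp_nat_mul]; ring_nf
      rw [h6]
      calc ((‖c‖ : ℝ) : ℂ) * (Complex.exp (2 * Real.pi * Complex.I * t) ^ 6 *
            Complex.exp (θ 0 * Complex.I))
          = Complex.exp (2 * Real.pi * Complex.I * t) ^ 6 *
            (((‖c‖ : ℝ) : ℂ) * Complex.exp (θ 0 * Complex.I)) := by ring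
        _ = Complex.exp (2 * Real.pi * Complex.I * t) ^ 6 * c := by rw [← key0]
        _ = ((‖c‖ : ℝ) : ℂ) * Complex.exp (θ t * Complex.I) := key t
    set F : ℝ → ℝ := fun t => θ t - θ 0 - 2 * Real.pi * (6 * t) with hFdef
    have hF : ∀ t : ℝ, ∃ n : ℤ, F t = n * (2 * Real.pi) := by
      intro t
      show ∃ n : ℤ, θ t - θ 0 - 2 * Real.pi * (6 * t) = _
      have := (Complex.exp_eq_exp_iff_exists_int).1 (key2 t).symm
      obtain ⟨n, hn⟩ := this
      refine ⟨n, ?_⟩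
      have him := congrArg Complex.im hn
      simp only [Complex.add_im, Complex.mul_im, Complex.mul_re, Complex.ofReal_re,
        Complex.ofReal_im, Complex.I_re, Complex.I_im, Complex.intCast_re, Complex.intCast_im,
        Complex.re_ofNat, Complex.im_ofNat] at him
      push_cast at him ⊢
      linarith
    have hFc : Continuous F := by
      apply (hθ.sub continuous_const).sub
      exact continuous_const.mul (continuous_const.mul continuous_id)
    have hF0 : F 0 = 0 := by simp [hFdef]
    obtain ⟨m, hm⟩ := hF 1
    have hm0 : m = 0 := by
      rcases lt_trichotomy m 0 with hlt | he | hgt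
      · exfalso
        have hm1 : (m : ℝ) ≤ -1 := by exact_mod_cast (by omega : m ≤ -1)
        have hmem : -Real.pi ∈ Set.Icc (F 1) (F 0) := by
          constructor
          · rw [hm]
            nlinarith [Real.pi_pos]
          · rw [hF0]; linarith [Real.pi_pos]
        obtain ⟨t, _, htv⟩ := intermediate_value_Icc' zero_le_one hFc.continuousOn hmem
        obtain ⟨n, hn⟩ := hF t
        rw [htv] at hn
        have h0 : ((2 * n + 1 : ℤ) : ℝ) * Real.pi = 0 := by
          push_cast
          linear_combination (-1 : ℝ) * hn
        have := mul_eq_zero.1 h0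
        rcases this with h1 | h1
        · have : (2 * n + 1 : ℤ) = 0 := by exact_mod_cast h1
          omega
        · exact Real.pi_ne_zero h1
      · exact he
      · exfalso
        have hm1 : (1 : ℝ) ≤ (m : ℝ) := by exact_mod_cast hgt
        have hmem : Real.pi ∈ Set.Icc (F 0) (F 1) := by
          constructor
          · rw [hF0]; linarith [Real.pi_pos]
          · rw [hm]
            nlinarith [Real.pi_pos]
        obtain ⟨t, _, htv⟩ := intermediate_value_Icc zero_le_one hFc.continuousOn hmem
        obtain ⟨n, hn⟩ := hF t
        rw [htv] at hn
        have h0 : ((2 * n - 1 : ℤ) : ℝ) * Real.pi = 0 := by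
          push_cast
          linear_combination (-1 : ℝ) * hn
        have := mul_eq_zero.1 h0
        rcases this with h1 | h1
        · have : (2 * n - 1 : ℤ) = 0 := by exact_mod_cast h1
          omega
        · exact Real.pi_ne_zero h1
    rw [hm0] at hm
    have hF1 : θ 1 - θ 0 - 2 * Real.pi * (6 * 1) = 0 := by
      have := hm
      simp only [hFdef] at this
      simpa using this
    linarith
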